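/- Let N ≥ 1 and let P, Q : ℝ → ℝ be continuous functions such that Q(s) ≠ 0 for all sufficiently large |s| and P(s)/Q(s) → 0 as |s| → +∞, and moreover Q(s) ≠ 0 for all sufficiently small |s| ≠ 0 and P(s)/Q(s) → 0 as s → 0. Suppose {vₙ} is a sequence of measurable functions from ℝᴺ to ℝ and v : ℝᴺ → ℝ is measurable, such that supₙ ∫_{ℝᴺ} |Q(vₙ(x))| dx < +∞, P(vₙ(x)) → v(x) almost everywhere in ℝᴺ, and supₙ |vₙ(x)| → 0 as |x| → +∞ (i.e. for every ε > 0 there exists R > 0 such that |vₙ(x)| ≤ ε for all n and all |x| ≥ R). Then ∫_{ℝᴺ} |P(vₙ(x)) − v(x)| dx → 0 as n → +∞. -/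

import Mathlib

open MeasureTheory Filter
open scoped ENNReal

private lemma strauss_split_abs (a b K t : ℝ) (hK : 0 ≤ K) (ht : t = 2*K+1) :
    |a - b| ≤ min |a - b| t + 2 * (if K < |a| then |a| else 0)
      + 2 * (if K < |b| then |b| else 0) := by
  have hab : |a - b| ≤ |a| + |b| := abs_sub a b
  have hA0 : 0 ≤ (if K < |a| then |a| else 0) := by
    split_ifs; exacts [abs_nonneg a, le_rfl]
  have hB0 : 0 ≤ (if K < |b| then |b| else 0) := by
    split_ifs; exacts [abs_nonneg b, le_rfl]
  have haA : |a| ≤ K + (if K < |a| then |a| else 0) := by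
    split_ifs with h
    · linarith
    · have := not_lt.mp h; linarith
  have hbB : |b| ≤ K + (if K < |b| then |b| else 0) := by
    split_ifs with h
    · linarith
    · have := not_lt.mp h; linarith
  rcases le_total |a - b| t with hle | hle
  · rw [min_eq_left hle]; linarith
  · rw [min_eq_right hle]; linarith

/-- Strauss compactness lemma, second part (Lemma 3.6): if in addition
`P(s)/Q(s) → 0` as `s → 0` and `supₙ |vₙ(x)| → 0` as `|x| → ∞`, then
`P(vₙ) → v` in `L¹(ℝᴺ)`. -/
theorem strauss_compactness_global
    (N : ℕ) (hN : 1 ≤ N) (P Q : ℝ → ℝ)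
    (hP : Continuous P) (hQ : Continuous Q)
    (hQne : ∃ M : ℝ, ∀ s : ℝ, M ≤ |s| → Q s ≠ 0)
    (hlim : Tendsto (fun s => P s / Q s) (cocompact ℝ) (nhds 0))
    (hQne0 : ∃ δ : ℝ, 0 < δ ∧ ∀ s : ℝ, s ≠ 0 → |s| ≤ δ → Q s ≠ 0)
    (hlim0 : Tendsto (fun s => P s / Q s) (nhdsWithin 0 {(0:ℝ)}ᶜ) (nhds 0))
    (v : ℕ → EuclideanSpace ℝ (Fin N) → ℝ) (w : EuclideanSpace ℝ (Fin N) → ℝ)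
    (hv : ∀ n, Measurable (v n)) (hw : Measurable w)
    (hbound : ∃ C : ℝ≥0∞, C < ⊤ ∧
      ∀ n, (∫⁻ x : EuclideanSpace ℝ (Fin N), ENNReal.ofReal |Q (v n x)|) ≤ C)
    (hae : ∀ᵐ x : EuclideanSpace ℝ (Fin N),
      Tendsto (fun n => P (v n x)) atTop (nhds (w x)))
    (hdecay : ∀ ε : ℝ, 0 < ε → ∃ R : ℝ, 0 < R ∧
      ∀ n, ∀ x : EuclideanSpace ℝ (Fin N), R ≤ ‖x‖ → |v n x| ≤ ε) :
    Tendsto (fun n => ∫⁻ x : EuclideanSpace ℝ (Fin N),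
      ENNReal.ofReal |P (v n x) - w x|) atTop (nhds 0) := by
  classical
  obtain ⟨C, hCtop, hC⟩ := hbound
  obtain ⟨M₀, hM₀⟩ := hQne
  obtain ⟨δ₀, hδ₀pos, hδ₀⟩ := hQne0
  -- P 0 = 0
  have hP0 : P 0 = 0 := by
    have hev : (fun s => P s / Q s * Q s) =ᶠ[nhdsWithin (0:ℝ) {(0:ℝ)}ᶜ] P := by
      have h1 : ∀ᶠ s in nhds (0:ℝ), |s| ≤ δ₀ := by
        filter_upwards [Metric.closedBall_mem_nhds (0:ℝ) hδ₀pos] with s hs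
        simpa [Real.dist_eq] using hs
      filter_upwards [h1.filter_mono nhdsWithin_le_nhds, eventually_mem_nhdsWithin]
        with s hs hs0
      exact div_mul_cancel₀ _ (hδ₀ s hs0 hs)
    have h2 : Tendsto P (nhdsWithin (0:ℝ) {(0:ℝ)}ᶜ) (nhds 0) := by
      have h := hlim0.mul ((hQ.tendsto 0).mono_left nhdsWithin_le_nhds)
      rw [zero_mul] at h
      exact h.congr' hev
    have h3 : Tendsto P (nhdsWithin (0:ℝ) {(0:ℝ)}ᶜ) (nhds (P 0)) :=
      (hP.tendsto 0).mono_left nhdsWithin_le_nhds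
    exact tendsto_nhds_unique h3 h2
  set c : ℝ := C.toReal with hc
  have hc0 : 0 ≤ c := ENNReal.toReal_nonneg
  have hCc : C = ENNReal.ofReal c := (ENNReal.ofReal_toReal hCtop.ne).symm
  -- key eventual bound
  have key : ∀ ε : ℝ, 0 < ε → ∀ᶠ n in atTop,
      (∫⁻ x : EuclideanSpace ℝ (Fin N), ENNReal.ofReal |P (v n x) - w x|)
        ≤ ENNReal.ofReal (ε * (4*c+3)) := by
    intro ε hε
    -- Step 1: behaviour at infinity
    obtain ⟨M, hM⟩ : ∃ M : ℝ, ∀ s, M ≤ |s| → |P s| ≤ ε * |Q s| := by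
      have hev : ∀ᶠ s in cocompact ℝ, |P s / Q s| ≤ ε := by
        filter_upwards [hlim (Metric.closedBall_mem_nhds (0:ℝ) hε)] with s hs
        simpa only [Set.mem_preimage, Metric.mem_closedBall, Real.dist_eq, sub_zero] using hs
      obtain ⟨t, htc, hts⟩ := mem_cocompact.mp hev
      obtain ⟨r, hr⟩ := htc.isBounded.subset_closedBall 0
      refine ⟨max M₀ (r+1), fun s hs => ?_⟩
      have hs0 : Q s ≠ 0 := hM₀ s (le_trans (le_max_left _ _) hs)
      have hsn : s ∉ t := by
        intro hmem
        have h1 := hr hmem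
        have h2 : |s| ≤ r := by simpa [Real.dist_eq] using h1
        have h3 : r + 1 ≤ |s| := le_trans (le_max_right _ _) hs
        linarith
      have h1 : |P s / Q s| ≤ ε := hts hsn
      calc |P s| = |P s / Q s| * |Q s| := by rw [← abs_mul, div_mul_cancel₀ _ hs0]
        _ ≤ ε * |Q s| := mul_le_mul_of_nonneg_right h1 (abs_nonneg _)
    -- Step 2: behaviour at zero
    obtain ⟨δ, hδpos, hδ⟩ : ∃ δ : ℝ, 0 < δ ∧ ∀ s, |s| ≤ δ → |P s| ≤ ε * |Q s| := by
      have hev : ∀ᶠ s in nhdsWithin (0:ℝ) {(0:ℝ)}ᶜ, |P s / Q s| ≤ ε := by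
        filter_upwards [hlim0 (Metric.closedBall_mem_nhds (0:ℝ) hε)] with s hs
        simpa only [Set.mem_preimage, Metric.mem_closedBall, Real.dist_eq, sub_zero] using hs
      rw [eventually_nhdsWithin_iff, Metric.eventually_nhds_iff] at hev
      obtain ⟨δ₁, hδ₁pos, h1⟩ := hev
      refine ⟨min (δ₁/2) δ₀, by positivity, fun s hs => ?_⟩
      rcases eq_or_ne s 0 with rfl | hs0
      · rw [hP0]
        simp only [abs_zero]
        positivity
      · have hQs : Q s ≠ 0 := hδ₀ s hs0 (le_trans hs (min_le_right _ _))
        have hdist : dist s 0 < δ₁ := by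
          rw [Real.dist_eq, sub_zero]
          have := le_trans hs (min_le_left _ _)
          have h2 : |s| ≤ δ₁ / 2 := this
          linarith
        have h3 : |P s / Q s| ≤ ε := h1 hdist hs0
        calc |P s| = |P s / Q s| * |Q s| := by rw [← abs_mul, div_mul_cancel₀ _ hQs]
          _ ≤ ε * |Q s| := mul_le_mul_of_nonneg_right h3 (abs_nonneg _)
    -- Step 3: the ball outside which the vₙ are small
    obtain ⟨R, hRpos, hR⟩ := hdecay δ hδpos
    set B : Set (EuclideanSpace ℝ (Fin N)) := Metric.closedBall 0 R with hBdef
    have hBmeas : MeasurableSet B := measurableSet_closedBall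
    have hμB : volume B < ⊤ := measure_closedBall_lt_top
    have hout : ∀ n x, x ∉ B → |P (v n x)| ≤ ε * |Q (v n x)| := by
      intro n x hx
      apply hδ
      apply hR n x
      have h1 : ¬ dist x 0 ≤ R := by simpa [hBdef, Metric.mem_closedBall] using hx
      rw [← dist_zero_right]
      exact (not_le.mp h1).le
    -- Step 4: bound for P on [-M, M]
    obtain ⟨K₀', hK₀'⟩ :=
      (isCompact_Icc (a := -M) (b := M)).exists_bound_of_continuousOn hP.continuousOn
    set K₀ : ℝ := max K₀' 0 with hK₀def
    have hK₀0 : 0 ≤ K₀ := le_max_right _ _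
    have hK₀ : ∀ s, |s| ≤ M → |P s| ≤ K₀ := by
      intro s hs
      have hmem : s ∈ Set.Icc (-M) M := by
        rcases abs_le.mp hs with ⟨h1, h2⟩
        exact Set.mem_Icc.mpr ⟨h1, h2⟩
      have := hK₀' s hmem
      rw [Real.norm_eq_abs] at this
      exact le_trans this (le_max_left _ _)
    have hbig : ∀ n x, K₀ < |P (v n x)| → |P (v n x)| ≤ ε * |Q (v n x)| := by
      intro n x hx
      by_cases hvx : |v n x| ≤ M
      · exact absurd (hK₀ _ hvx) (not_le.mpr hx)
      · exact hM _ (not_le.mp hvx).le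
    -- measurability helpers
    have hQmeas : ∀ n, Measurable fun x => ENNReal.ofReal |Q (v n x)| := fun n =>
      ((hQ.measurable.comp (hv n)).abs).ennreal_ofReal
    have hPmeas : ∀ n, Measurable fun x => ENNReal.ofReal |P (v n x)| := fun n =>
      ((hP.measurable.comp (hv n)).abs).ennreal_ofReal
    -- uniform L¹ bound for P ∘ vₙ
    have hPbound : ∀ n x, ENNReal.ofReal |P (v n x)| ≤
        ENNReal.ofReal ε * ENNReal.ofReal |Q (v n x)|
          + B.indicator (fun _ => ENNReal.ofReal K₀) x := by
      intro n x
      by_cases hx : x ∈ B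
      · by_cases hvx : |v n x| ≤ M
        · have h1 : ENNReal.ofReal |P (v n x)| ≤ B.indicator (fun _ => ENNReal.ofReal K₀) x := by
            rw [Set.indicator_of_mem hx]
            exact ENNReal.ofReal_le_ofReal (hK₀ _ hvx)
          exact h1.trans le_add_self
        · have h1 := hM _ (not_le.mp hvx).le
          have h2 : ENNReal.ofReal |P (v n x)| ≤ ENNReal.ofReal ε * ENNReal.ofReal |Q (v n x)| := by
            rw [← ENNReal.ofReal_mul hε.le]
            exact ENNReal.ofReal_le_ofReal h1
          exact h2.trans le_self_add
      · have h1 := hout n x hx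
        have h2 : ENNReal.ofReal |P (v n x)| ≤ ENNReal.ofReal ε * ENNReal.ofReal |Q (v n x)| := by
          rw [← ENNReal.ofReal_mul hε.le]
          exact ENNReal.ofReal_le_ofReal h1
        exact h2.trans le_self_add
    set Cw : ℝ≥0∞ := ENNReal.ofReal ε * C + ENNReal.ofReal K₀ * volume B with hCwdef
    have hCwtop : Cw ≠ ⊤ := by
      rw [hCwdef]
      exact ENNReal.add_ne_top.mpr
        ⟨ENNReal.mul_ne_top ENNReal.ofReal_ne_top hCtop.ne,
         ENNReal.mul_ne_top ENNReal.ofReal_ne_top hμB.ne⟩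
    have hIntP : ∀ n, (∫⁻ x, ENNReal.ofReal |P (v n x)|) ≤ Cw := by
      intro n
      calc (∫⁻ x, ENNReal.ofReal |P (v n x)|)
          ≤ ∫⁻ x, (ENNReal.ofReal ε * ENNReal.ofReal |Q (v n x)|
              + B.indicator (fun _ => ENNReal.ofReal K₀) x) := lintegral_mono (hPbound n)
        _ = ENNReal.ofReal ε * (∫⁻ x, ENNReal.ofReal |Q (v n x)|)
              + ENNReal.ofReal K₀ * volume B := by
            rw [lintegral_add_left ((hQmeas n).const_mul _),
              lintegral_const_mul _ (hQmeas n), lintegral_indicator hBmeas,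
              setLIntegral_const]
        _ ≤ Cw := by
            rw [hCwdef]
            gcongr
            exact hC n
    -- a.e. identification of |w| as a liminf
    have hwlim : ∀ᵐ x : EuclideanSpace ℝ (Fin N),
        ENNReal.ofReal |w x| = liminf (fun n => ENNReal.ofReal |P (v n x)|) atTop := by
      filter_upwards [hae] with x hx
      have h1 : Tendsto (fun n => ENNReal.ofReal |P (v n x)|) atTop
          (nhds (ENNReal.ofReal |w x|)) := ENNReal.tendsto_ofReal hx.abs
      exact h1.liminf_eq.symm
    have hIntw : (∫⁻ x, ENNReal.ofReal |w x|) ≤ Cw := by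
      calc (∫⁻ x, ENNReal.ofReal |w x|)
          = ∫⁻ x, liminf (fun n => ENNReal.ofReal |P (v n x)|) atTop :=
            lintegral_congr_ae hwlim
        _ ≤ liminf (fun n => ∫⁻ x, ENNReal.ofReal |P (v n x)|) atTop :=
            lintegral_liminf_le hPmeas
        _ ≤ Cw := by
            have h2 : liminf (fun n => ∫⁻ x, ENNReal.ofReal |P (v n x)|) atTop
                ≤ liminf (fun _ : ℕ => Cw) atTop :=
              Filter.liminf_le_liminf (Eventually.of_forall hIntP)
            rwa [liminf_const] at h2
    have hwfin : (∫⁻ x, ENNReal.ofReal |w x|) ≠ ⊤ :=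
      (lt_of_le_of_lt hIntw (lt_top_iff_ne_top.mpr hCwtop)).ne
    -- tail of w
    obtain ⟨Kw, hKw⟩ : ∃ Kw : ℕ,
        (∫⁻ x, (if (Kw:ℝ) < |w x| then ENNReal.ofReal |w x| else 0)) ≤ ENNReal.ofReal ε := by
      have hT : Tendsto (fun k : ℕ =>
          ∫⁻ x, (if (k:ℝ) < |w x| then ENNReal.ofReal |w x| else 0)) atTop (nhds 0) := by
        have := tendsto_lintegral_of_dominated_convergence (μ := volume)
          (F := fun (k : ℕ) x => if (k:ℝ) < |w x| then ENNReal.ofReal |w x| else 0)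
          (f := fun _ => 0) (bound := fun x => ENNReal.ofReal |w x|)
          (fun k => Measurable.ite (measurableSet_lt measurable_const hw.abs)
            hw.abs.ennreal_ofReal measurable_const)
          (fun k => Eventually.of_forall fun x => by
            dsimp only
            split_ifs with hx
            · exact le_rfl
            · exact zero_le)
          hwfin
          (Eventually.of_forall fun x => by
            have hev : ∀ᶠ k : ℕ in atTop, ¬((k:ℝ) < |w x|) := by
              rw [eventually_atTop]
              exact ⟨⌈|w x|⌉₊, fun k hk =>
                not_lt.mpr (le_trans (Nat.le_ceil _) (by exact_mod_cast hk))⟩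
            refine Tendsto.congr' ?_ tendsto_const_nhds
            filter_upwards [hev] with k hk
            simp [hk])
        simpa using this
      exact (hT.eventually (eventually_le_nhds (ENNReal.ofReal_pos.mpr hε))).exists
    set K : ℝ := max K₀ (Kw : ℝ) with hKdef
    have hK0 : 0 ≤ K := le_trans hK₀0 (le_max_left _ _)
    set t : ℝ := 2*K+1 with htdef
    have ht0 : 0 ≤ t := by rw [htdef]; linarith
    -- truncation pieces
    set h : EuclideanSpace ℝ (Fin N) → ℝ≥0∞ :=
      fun x => if K < |w x| then ENNReal.ofReal |w x| else 0 with hhdef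
    have hhmeas : Measurable h :=
      Measurable.ite (measurableSet_lt measurable_const hw.abs)
        hw.abs.ennreal_ofReal measurable_const
    have hInth : (∫⁻ x, h x) ≤ ENNReal.ofReal ε := by
      refine le_trans (lintegral_mono fun x => ?_) hKw
      simp only [hhdef]
      by_cases hx : K < |w x|
      · rw [if_pos hx, if_pos (lt_of_le_of_lt (le_trans (le_max_right _ _) le_rfl) hx)]
      · rw [if_neg hx]
        exact zero_le
    set g : ℕ → EuclideanSpace ℝ (Fin N) → ℝ≥0∞ :=
      fun n x => if K < |P (v n x)| then ENNReal.ofReal |P (v n x)| else 0 with hgdef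
    have hgmeas : ∀ n, Measurable (g n) := fun n =>
      Measurable.ite (measurableSet_lt measurable_const (hP.measurable.comp (hv n)).abs)
        (hP.measurable.comp (hv n)).abs.ennreal_ofReal measurable_const
    have hIntg : ∀ n, (∫⁻ x, g n x) ≤ ENNReal.ofReal ε * C := by
      intro n
      have hpt : ∀ x, g n x ≤ ENNReal.ofReal ε * ENNReal.ofReal |Q (v n x)| := by
        intro x
        simp only [hgdef]
        by_cases hx : K < |P (v n x)|
        · rw [if_pos hx, ← ENNReal.ofReal_mul hε.le]
          exact ENNReal.ofReal_le_ofReal (hbig n x (lt_of_le_of_lt (le_max_left _ _) hx))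
        · rw [if_neg hx]
          exact zero_le
      calc (∫⁻ x, g n x) ≤ ∫⁻ x, ENNReal.ofReal ε * ENNReal.ofReal |Q (v n x)| :=
            lintegral_mono hpt
        _ = ENNReal.ofReal ε * ∫⁻ x, ENNReal.ofReal |Q (v n x)| :=
            lintegral_const_mul _ (hQmeas n)
        _ ≤ ENNReal.ofReal ε * C := mul_le_mul_right (hC n) _
    -- the truncated differences
    set F : ℕ → EuclideanSpace ℝ (Fin N) → ℝ≥0∞ :=
      fun n x => ENNReal.ofReal (min |P (v n x) - w x| t) with hFdef
    have hFmeas : ∀ n, Measurable (F n) := fun n =>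
      (((hP.measurable.comp (hv n)).sub hw).abs.min measurable_const).ennreal_ofReal
    have hA : Tendsto (fun n => ∫⁻ x in B, F n x) atTop (nhds 0) := by
      have hdct := tendsto_lintegral_of_dominated_convergence (μ := volume.restrict B)
        (F := fun n x => F n x) (f := fun _ => 0) (bound := fun _ => ENNReal.ofReal t)
        (fun n => hFmeas n)
        (fun n => Eventually.of_forall fun x =>
          ENNReal.ofReal_le_ofReal (min_le_right _ _))
        (by
          rw [lintegral_const, Measure.restrict_apply_univ]
          exact ENNReal.mul_ne_top ENNReal.ofReal_ne_top hμB.ne)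
        (by
          refine ae_restrict_of_ae ?_
          filter_upwards [hae] with x hx
          have h1 : Tendsto (fun n => |P (v n x) - w x|) atTop (nhds 0) := by
            have := (hx.sub (tendsto_const_nhds (x := w x))).abs
            simpa using this
          have h2 : Tendsto (fun n => min |P (v n x) - w x| t) atTop (nhds 0) := by
            have := h1.min (tendsto_const_nhds (x := t))
            rwa [min_eq_left ht0] at this
          have h3 := ENNReal.tendsto_ofReal h2
          rw [ENNReal.ofReal_zero] at h3
          exact h3)
      simpa using hdct
    -- main decomposition
    have hmain : ∀ n, (∫⁻ x, ENNReal.ofReal |P (v n x) - w x|) ≤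
        (∫⁻ x in B, F n x) + 2 * (ENNReal.ofReal ε * C) + 2 * ENNReal.ofReal ε
          + ENNReal.ofReal ε * C + ENNReal.ofReal ε * C := by
      intro n
      rw [← lintegral_add_compl (fun x => ENNReal.ofReal |P (v n x) - w x|) hBmeas]
      have hBpart : (∫⁻ x in B, ENNReal.ofReal |P (v n x) - w x|) ≤
          (∫⁻ x in B, F n x) + 2 * (ENNReal.ofReal ε * C) + 2 * ENNReal.ofReal ε := by
        have hpt : ∀ x, ENNReal.ofReal |P (v n x) - w x| ≤ F n x + 2 * g n x + 2 * h x := by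
          intro x
          have hreal := strauss_split_abs (P (v n x)) (w x) K t hK0 htdef
          have h2 : (0:ℝ) ≤ (if K < |P (v n x)| then |P (v n x)| else 0) := by
            split_ifs; exacts [abs_nonneg _, le_rfl]
          have h3 : (0:ℝ) ≤ (if K < |w x| then |w x| else 0) := by
            split_ifs; exacts [abs_nonneg _, le_rfl]
          have h1 : (0:ℝ) ≤ min |P (v n x) - w x| t := le_min (abs_nonneg _) ht0
          calc ENNReal.ofReal |P (v n x) - w x|
              ≤ ENNReal.ofReal (min |P (v n x) - w x| t
                  + 2*(if K < |P (v n x)| then |P (v n x)| else 0)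
                  + 2*(if K < |w x| then |w x| else 0)) :=
                ENNReal.ofReal_le_ofReal hreal
            _ = F n x + 2 * g n x + 2 * h x := by
                rw [ENNReal.ofReal_add (by nlinarith) (by nlinarith),
                  ENNReal.ofReal_add h1 (by nlinarith),
                  ENNReal.ofReal_mul (by norm_num : (0:ℝ) ≤ 2),
                  ENNReal.ofReal_mul (by norm_num : (0:ℝ) ≤ 2),
                  apply_ite ENNReal.ofReal, apply_ite ENNReal.ofReal]
                simp [hFdef, hgdef, hhdef]
        calc (∫⁻ x in B, ENNReal.ofReal |P (v n x) - w x|)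
            ≤ ∫⁻ x in B, (F n x + 2 * g n x + 2 * h x) := lintegral_mono hpt
          _ = (∫⁻ x in B, F n x) + 2 * (∫⁻ x in B, g n x) + 2 * (∫⁻ x in B, h x) := by
              rw [lintegral_add_right _ (hhmeas.const_mul 2),
                lintegral_add_right _ ((hgmeas n).const_mul 2),
                lintegral_const_mul _ (hgmeas n), lintegral_const_mul _ hhmeas]
          _ ≤ (∫⁻ x in B, F n x) + 2 * (ENNReal.ofReal ε * C) + 2 * ENNReal.ofReal ε := by
              gcongr
              · exact le_trans (setLIntegral_le_lintegral _ _) (hIntg n)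
              · exact le_trans (setLIntegral_le_lintegral _ _) hInth
      have hBc : (∫⁻ x in Bᶜ, ENNReal.ofReal |P (v n x) - w x|) ≤
          ENNReal.ofReal ε * C + ENNReal.ofReal ε * C := by
        have hpt : ∀ x : EuclideanSpace ℝ (Fin N), ENNReal.ofReal |P (v n x) - w x| ≤
            ENNReal.ofReal |P (v n x)| + ENNReal.ofReal |w x| := by
          intro x
          rw [← ENNReal.ofReal_add (abs_nonneg _) (abs_nonneg _)]
          exact ENNReal.ofReal_le_ofReal (abs_sub _ _)
        calc (∫⁻ x in Bᶜ, ENNReal.ofReal |P (v n x) - w x|)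
            ≤ ∫⁻ x in Bᶜ, (ENNReal.ofReal |P (v n x)| + ENNReal.ofReal |w x|) :=
              lintegral_mono hpt
          _ = (∫⁻ x in Bᶜ, ENNReal.ofReal |P (v n x)|)
                + (∫⁻ x in Bᶜ, ENNReal.ofReal |w x|) :=
              lintegral_add_left (hPmeas n) _
          _ ≤ ENNReal.ofReal ε * C + ENNReal.ofReal ε * C := by
              gcongr
              · calc (∫⁻ x in Bᶜ, ENNReal.ofReal |P (v n x)|)
                    ≤ ∫⁻ x in Bᶜ, ENNReal.ofReal ε * ENNReal.ofReal |Q (v n x)| :=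
                      setLIntegral_mono ((hQmeas n).const_mul _) (fun x hx => by
                        rw [← ENNReal.ofReal_mul hε.le]
                        exact ENNReal.ofReal_le_ofReal (hout n x hx))
                  _ = ENNReal.ofReal ε * ∫⁻ x in Bᶜ, ENNReal.ofReal |Q (v n x)| :=
                      lintegral_const_mul _ (hQmeas n)
                  _ ≤ ENNReal.ofReal ε * C :=
                      mul_le_mul_right (le_trans (setLIntegral_le_lintegral _ _) (hC n)) _
              · calc (∫⁻ x in Bᶜ, ENNReal.ofReal |w x|)
                    = ∫⁻ x in Bᶜ, liminf (fun m => ENNReal.ofReal |P (v m x)|) atTop :=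
                      lintegral_congr_ae (ae_restrict_of_ae hwlim)
                  _ ≤ ∫⁻ x in Bᶜ, liminf
                        (fun m => ENNReal.ofReal ε * ENNReal.ofReal |Q (v m x)|) atTop := by
                      refine lintegral_mono_ae ?_
                      filter_upwards [ae_restrict_mem hBmeas.compl] with x hx
                      refine Filter.liminf_le_liminf (Eventually.of_forall fun m => ?_)
                      rw [← ENNReal.ofReal_mul hε.le]
                      exact ENNReal.ofReal_le_ofReal (hout m x hx)
                  _ ≤ liminf (fun m => ∫⁻ x in Bᶜ,
                        ENNReal.ofReal ε * ENNReal.ofReal |Q (v m x)|) atTop :=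
                      lintegral_liminf_le (fun m => (hQmeas m).const_mul _)
                  _ ≤ ENNReal.ofReal ε * C := by
                      have hb : ∀ m, (∫⁻ x in Bᶜ,
                          ENNReal.ofReal ε * ENNReal.ofReal |Q (v m x)|)
                            ≤ ENNReal.ofReal ε * C := fun m => by
                        rw [lintegral_const_mul _ (hQmeas m)]
                        exact mul_le_mul_right
                          (le_trans (setLIntegral_le_lintegral _ _) (hC m)) _
                      have h2 : liminf (fun m => ∫⁻ x in Bᶜ,
                            ENNReal.ofReal ε * ENNReal.ofReal |Q (v m x)|) atTop
                          ≤ liminf (fun _ : ℕ => ENNReal.ofReal ε * C) atTop :=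
                        Filter.liminf_le_liminf (Eventually.of_forall hb)
                      rwa [liminf_const] at h2
      calc (∫⁻ x in B, ENNReal.ofReal |P (v n x) - w x|)
            + (∫⁻ x in Bᶜ, ENNReal.ofReal |P (v n x) - w x|)
          ≤ ((∫⁻ x in B, F n x) + 2 * (ENNReal.ofReal ε * C) + 2 * ENNReal.ofReal ε)
              + (ENNReal.ofReal ε * C + ENNReal.ofReal ε * C) := add_le_add hBpart hBc
        _ = (∫⁻ x in B, F n x) + 2 * (ENNReal.ofReal ε * C) + 2 * ENNReal.ofReal ε
              + ENNReal.ofReal ε * C + ENNReal.ofReal ε * C := by ring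
    -- put it together
    filter_upwards [hA.eventually (eventually_le_nhds (ENNReal.ofReal_pos.mpr hε))]
      with n hn
    calc (∫⁻ x, ENNReal.ofReal |P (v n x) - w x|)
        ≤ (∫⁻ x in B, F n x) + 2 * (ENNReal.ofReal ε * C) + 2 * ENNReal.ofReal ε
            + ENNReal.ofReal ε * C + ENNReal.ofReal ε * C := hmain n
      _ ≤ ENNReal.ofReal ε + 2 * (ENNReal.ofReal ε * C) + 2 * ENNReal.ofReal ε
            + ENNReal.ofReal ε * C + ENNReal.ofReal ε * C := by gcongr
      _ = ENNReal.ofReal ε * (4 * ENNReal.ofReal c + 3) := by rw [hCc]; ring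
      _ = ENNReal.ofReal (ε * (4*c+3)) := by
          rw [ENNReal.ofReal_mul hε.le]
          congr 1
          rw [ENNReal.ofReal_add (by positivity) (by norm_num),
            ENNReal.ofReal_mul (by norm_num : (0:ℝ) ≤ 4)]
          norm_num
  -- conclude
  rw [ENNReal.tendsto_atTop_zero]
  intro ε' hε'
  set d : ℝ≥0∞ := min ε' 1 with hd
  have hd0 : 0 < d := lt_min hε' zero_lt_one
  have hdtop : d ≠ ⊤ := ne_top_of_le_ne_top ENNReal.one_ne_top (min_le_right _ _)
  have hdr : 0 < d.toReal := ENNReal.toReal_pos hd0.ne' hdtop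
  set ε : ℝ := d.toReal / (4*c+4) with hεd
  have hεpos : 0 < ε := div_pos hdr (by positivity)
  obtain ⟨n₀, hn₀⟩ := eventually_atTop.mp (key ε hεpos)
  refine ⟨n₀, fun n hn => le_trans (hn₀ n hn) ?_⟩
  have h1 : ε * (4*c+3) ≤ d.toReal := by
    rw [hεd, div_mul_eq_mul_div, div_le_iff₀ (by positivity)]
    nlinarith [hdr.le, hc0]
  calc ENNReal.ofReal (ε*(4*c+3)) ≤ ENNReal.ofReal d.toReal := ENNReal.ofReal_le_ofReal h1
    _ = d := ENNReal.ofReal_toReal hdtop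
    _ ≤ ε' := min_le_left _ _
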